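/- Let w_1 ∈ K be deterministic, let (g̃_t)_{1≤t≤T} be square-integrable H-valued random vectors with g̃_t being 𝓕_t-measurable, let (g_t)_{1≤t≤T} be 𝓕_{t−1}-measurable H-valued random vectors with 𝔼[g̃_t | 𝓕_{t−1}] = g_t, and set γ_t = g̃_t − g_t. Define the iterates w_{t+1} = Π_K(w_t − η_t g̃_t) with η_t = D/(√2 · √(∑_{τ=1}^t ‖g̃_τ‖²)) whenever the denominator is positive, and w_{t+1} = w_t otherwise. Let w* ∈ K be fixed and let R be a nonnegative random variable with R ≤ ∑_{t=1}^T ⟨g_t, w_t − w*⟩ almost surely. Then the second moment of R satisfies 𝔼[R²] ≤ D² · 𝔼[∑_{t=1}^T (4‖g_t‖² + 6‖γ_t‖²)] ≤ 6 D² · 𝔼[∑_{t=1}^T ‖g̃_t‖²]. -/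

import Mathlib

open MeasureTheory Finset
open scoped RealInnerProductSpace

section FULLAUX


variable {Ω : Type*} {m m0 : MeasurableSpace Ω} {μ : Measure Ω}
  {H : Type*} [NormedAddCommGroup H] [InnerProductSpace ℝ H] [CompleteSpace H]

lemma aux_condExpL2_ae_eq (hm : m ≤ m0) [IsProbabilityMeasure μ] {f : Ω → H}
    (hf : MemLp f 2 μ) :
    (condExpL2 H ℝ hm (hf.toLp f) : Ω → H) =ᵐ[μ] μ[f|m] := by
  haveI : SigmaFinite (μ.trim hm) := by infer_instance
  refine ae_eq_condExp_of_forall_setIntegral_eq hm (hf.integrable one_le_two) ?_ ?_ ?_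
  · intro s hs hμs
    exact integrableOn_condExpL2_of_measure_ne_top hm hμs.ne _
  · intro s hs hμs
    rw [integral_condExpL2_eq hm (hf.toLp f) hs hμs.ne]
    exact setIntegral_congr_ae (hm s hs) (hf.coeFn_toLp.mono fun x hx _ => hx)
  · exact lpMeas.aestronglyMeasurable _

lemma aux_condexp_memℒp (hm : m ≤ m0) [IsProbabilityMeasure μ] {f : Ω → H}
    (hf : MemLp f 2 μ) : MemLp (μ[f|m]) 2 μ :=
  (Lp.memLp _).ae_eq (aux_condExpL2_ae_eq hm hf)

lemma aux_inner_condexp_zero (hm : m ≤ m0) [IsProbabilityMeasure μ] {f Z : Ω → H}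
    (hf : MemLp f 2 μ) (h0 : μ[f|m] =ᵐ[μ] 0)
    (hZ : MemLp Z 2 μ) (hZm : AEStronglyMeasurable[m] Z μ) :
    ∫ ω, ⟪f ω, Z ω⟫ ∂μ = 0 := by
  have h1 : ∫ ω, ⟪f ω, Z ω⟫ ∂μ = (inner ℝ (hf.toLp f) (hZ.toLp Z) : ℝ) := by
    rw [L2.inner_def]
    refine integral_congr_ae ?_
    filter_upwards [hf.coeFn_toLp, hZ.coeFn_toLp] with ω h1 h2
    rw [h1, h2]
  have hZm' : AEStronglyMeasurable[m] (hZ.toLp Z : Ω → H) μ :=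
    hZm.congr hZ.coeFn_toLp.symm
  have h2 := inner_condExpL2_eq_inner_fun (𝕜 := ℝ) hm (hf.toLp f) (hZ.toLp Z) hZm'
  rw [h1, ← h2, L2.inner_def]
  have h3 : (condExpL2 H ℝ hm (hf.toLp f) : Ω → H) =ᵐ[μ] 0 :=
    (aux_condExpL2_ae_eq hm hf).trans h0
  rw [integral_congr_ae (g := fun _ => (0:ℝ)) ?_, integral_zero]
  filter_upwards [h3] with ω hω
  rw [hω]
  simp
variable {H : Type*} [NormedAddCommGroup H] [InnerProductSpace ℝ H] [CompleteSpace H]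
  {K : Set H}

lemma aux_proj_var (hKconvex : Convex ℝ K) {proj : H → H}
    (hproj_mem : ∀ v, proj v ∈ K)
    (hproj_min : ∀ v, ∀ u ∈ K, ‖v - proj v‖ ≤ ‖v - u‖) (v : H) :
    ∀ u ∈ K, ⟪v - proj v, u - proj v⟫ ≤ 0 := by
  refine (norm_eq_iInf_iff_real_inner_le_zero hKconvex (hproj_mem v)).1 ?_
  haveI : Nonempty K := ⟨⟨proj v, hproj_mem v⟩⟩
  refine le_antisymm (le_ciInf fun u => hproj_min v u u.2) ?_
  have hbdd : BddBelow (Set.range fun u : K => ‖v - (u : H)‖) := by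
    refine ⟨0, fun x hx => ?_⟩
    obtain ⟨u, rfl⟩ := hx
    exact norm_nonneg _
  exact ciInf_le hbdd ⟨proj v, hproj_mem v⟩

lemma aux_proj_dist (hKconvex : Convex ℝ K) {proj : H → H}
    (hproj_mem : ∀ v, proj v ∈ K)
    (hproj_min : ∀ v, ∀ u ∈ K, ‖v - proj v‖ ≤ ‖v - u‖) (v : H)
    {u : H} (hu : u ∈ K) : ‖proj v - u‖ ≤ ‖v - u‖ := by
  have h := aux_proj_var hKconvex hproj_mem hproj_min v u hu
  have hexp : ‖v - u‖ ^ 2 = ‖v - proj v‖ ^ 2 - 2 * ⟪v - proj v, u - proj v⟫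
      + ‖proj v - u‖ ^ 2 := by
    have : v - u = (v - proj v) - (u - proj v) := by abel
    rw [this, norm_sub_sq_real]
    have h2 : ‖u - proj v‖ = ‖proj v - u‖ := by rw [norm_sub_rev]
    rw [h2]
  have h1 : ‖proj v - u‖ ^ 2 ≤ ‖v - u‖ ^ 2 := by nlinarith [sq_nonneg ‖v - proj v‖]
  exact (abs_le_of_sq_le_sq' h1 (norm_nonneg _)).2

lemma aux_proj_lip (hKconvex : Convex ℝ K) {proj : H → H}
    (hproj_mem : ∀ v, proj v ∈ K)
    (hproj_min : ∀ v, ∀ u ∈ K, ‖v - proj v‖ ≤ ‖v - u‖) (a b : H) :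
    ‖proj a - proj b‖ ≤ ‖a - b‖ := by
  have h1 := aux_proj_var hKconvex hproj_mem hproj_min a (proj b) (hproj_mem b)
  have h2 := aux_proj_var hKconvex hproj_mem hproj_min b (proj a) (hproj_mem a)
  have key : ‖proj a - proj b‖ ^ 2 ≤ ⟪a - b, proj a - proj b⟫ := by
    have e1 : ⟪a - proj a, proj b - proj a⟫ ≤ 0 := h1
    have e2 : ⟪b - proj b, proj a - proj b⟫ ≤ 0 := h2
    have expand : ⟪a - b, proj a - proj b⟫ - ‖proj a - proj b‖ ^ 2
        = -⟪a - proj a, proj b - proj a⟫ - ⟪b - proj b, proj a - proj b⟫ := by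
      rw [norm_sub_sq_real]
      simp only [inner_sub_left, inner_sub_right, real_inner_self_eq_norm_sq]
      rw [real_inner_comm (proj b) (proj a)]
      ring
    nlinarith
  have hcs : ⟪a - b, proj a - proj b⟫ ≤ ‖a - b‖ * ‖proj a - proj b‖ :=
    real_inner_le_norm _ _
  rcases eq_or_lt_of_le (norm_nonneg (proj a - proj b)) with h | h
  · rw [← h]; exact norm_nonneg _
  · nlinarith

lemma aux_sum_div_sqrt {x : ℕ → ℝ} (hx : ∀ t, 0 ≤ x t) (n : ℕ) :
    ∑ t ∈ Icc 1 n, x t / Real.sqrt (∑ τ ∈ Icc 1 t, x τ)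
      ≤ 2 * Real.sqrt (∑ τ ∈ Icc 1 n, x τ) := by
  induction n with
  | zero => simp
  | succ n ih =>
    have hS : ∀ m : ℕ, 0 ≤ ∑ τ ∈ Icc 1 m, x τ := fun m => sum_nonneg fun τ _ => hx τ
    have hstep : ∑ τ ∈ Icc 1 (n+1), x τ = (∑ τ ∈ Icc 1 n, x τ) + x (n+1) :=
      Finset.sum_Icc_succ_top (Nat.one_le_iff_ne_zero.2 (Nat.succ_ne_zero n)) x
    rw [Finset.sum_Icc_succ_top (Nat.one_le_iff_ne_zero.2 (Nat.succ_ne_zero n))]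
    set A := ∑ τ ∈ Icc 1 n, x τ with hA
    set B := ∑ τ ∈ Icc 1 (n+1), x τ with hB
    have hAB : B = A + x (n+1) := hstep
    have hA0 : 0 ≤ A := hS n
    have hB0 : 0 ≤ B := hS (n+1)
    have hAle : A ≤ B := by rw [hAB]; linarith [hx (n+1)]
    have hsq : Real.sqrt A ≤ Real.sqrt B := Real.sqrt_le_sqrt hAle
    have key : x (n+1) / Real.sqrt B ≤ 2 * Real.sqrt B - 2 * Real.sqrt A := by
      rcases eq_or_lt_of_le hB0 with hB0' | hB0'
      · have hxz : x (n+1) = 0 := by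
          have : A = 0 := le_antisymm (by linarith) hA0
          rw [hAB, this] at hB0'; linarith
        have hAz : A = 0 := by linarith [hAB ▸ hB0'.symm, hx (n+1)]
        simp [hxz, hAz, ← hB0']
      · have hsB : 0 < Real.sqrt B := Real.sqrt_pos.2 hB0'
        rw [div_le_iff₀ hsB]
        have h1 : Real.sqrt A * Real.sqrt B ≤ B := by
          calc Real.sqrt A * Real.sqrt B ≤ Real.sqrt B * Real.sqrt B :=
                mul_le_mul_of_nonneg_right hsq (Real.sqrt_nonneg _)
            _ = B := Real.mul_self_sqrt hB0
        have h2 : Real.sqrt B * Real.sqrt B = B := Real.mul_self_sqrt hB0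
        nlinarith [Real.mul_self_sqrt hA0, sq_nonneg (Real.sqrt A - Real.sqrt B), hAB]
    calc ∑ t ∈ Icc 1 n, x t / Real.sqrt (∑ τ ∈ Icc 1 t, x τ) + x (n+1) / Real.sqrt B
        ≤ 2 * Real.sqrt A + (2 * Real.sqrt B - 2 * Real.sqrt A) := add_le_add ih key
      _ = 2 * Real.sqrt B := by ring
lemma aux_regret (hKconvex : Convex ℝ K)
    {D : ℝ} (hD : ∀ w ∈ K, ∀ v ∈ K, ‖w - v‖ ≤ D)
    {proj : H → H} (hproj_mem : ∀ v, proj v ∈ K)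
    (hproj_min : ∀ v, ∀ u ∈ K, ‖v - proj v‖ ≤ ‖v - u‖)
    (G : ℕ → H) (v : ℕ → H)
    (hmem : ∀ t, 1 ≤ t → v t ∈ K)
    (hiter_pos : ∀ t, 1 ≤ t → 0 < Real.sqrt (∑ τ ∈ Icc 1 t, ‖G τ‖ ^ 2) →
      v (t+1) = proj (v t - (D / (Real.sqrt 2 * Real.sqrt (∑ τ ∈ Icc 1 t, ‖G τ‖ ^ 2))) • G t))
    (hiter_zero : ∀ t, 1 ≤ t → Real.sqrt (∑ τ ∈ Icc 1 t, ‖G τ‖ ^ 2) = 0 → v (t+1) = v t)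
    {wstar : H} (hwstar : wstar ∈ K) (T : ℕ) :
    ∑ t ∈ Icc 1 T, ⟪G t, v t - wstar⟫ ≤
      Real.sqrt 2 * D * Real.sqrt (∑ τ ∈ Icc 1 T, ‖G τ‖ ^ 2) := by
  have hD0 : 0 ≤ D := by simpa using hD wstar hwstar wstar hwstar
  have hS0 : ∀ n : ℕ, 0 ≤ ∑ τ ∈ Icc 1 n, ‖G τ‖ ^ 2 :=
    fun n => sum_nonneg fun τ _ => sq_nonneg _
  have hSmono : ∀ n : ℕ, (∑ τ ∈ Icc 1 n, ‖G τ‖ ^ 2) ≤ ∑ τ ∈ Icc 1 (n+1), ‖G τ‖ ^ 2 := by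
    intro n
    rw [Finset.sum_Icc_succ_top (Nat.one_le_iff_ne_zero.2 (Nat.succ_ne_zero n))]
    nlinarith [sq_nonneg ‖G (n+1)‖]
  have haD : ∀ t, 1 ≤ t → ‖v t - wstar‖ ^ 2 ≤ D ^ 2 := by
    intro t ht
    have := hD (v t) (hmem t ht) wstar hwstar
    nlinarith [norm_nonneg (v t - wstar)]
  rcases eq_or_lt_of_le hD0 with hDz | hDpos
  · -- D = 0 case
    have hveq : ∀ t, 1 ≤ t → v t = wstar := by
      intro t ht
      have h1 := hD (v t) (hmem t ht) wstar hwstar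
      rw [← hDz] at h1
      have := norm_nonneg (v t - wstar)
      have : ‖v t - wstar‖ = 0 := le_antisymm h1 this
      rwa [norm_sub_eq_zero_iff] at this
    have : ∑ t ∈ Icc 1 T, ⟪G t, v t - wstar⟫ = 0 := by
      refine Finset.sum_eq_zero fun t ht => ?_
      rw [hveq t (mem_Icc.1 ht).1, sub_self, inner_zero_right]
    rw [this, ← hDz]
    simp [mul_nonneg (Real.sqrt_nonneg 2), Real.sqrt_nonneg]
  · -- D > 0 case
    have hu2 : Real.sqrt 2 * Real.sqrt 2 = 2 := Real.mul_self_sqrt (by norm_num)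
    have hs2pos : 0 < Real.sqrt 2 := Real.sqrt_pos.2 (by norm_num)
    have key : ∀ n : ℕ,
        ∑ t ∈ Icc 1 n, ⟪G t, v t - wstar⟫
          + (Real.sqrt (∑ τ ∈ Icc 1 n, ‖G τ‖ ^ 2) / (Real.sqrt 2 * D)) * ‖v (n+1) - wstar‖ ^ 2
        ≤ (Real.sqrt (∑ τ ∈ Icc 1 n, ‖G τ‖ ^ 2) / (Real.sqrt 2 * D)) * D ^ 2
          + ∑ t ∈ Icc 1 n,
              (D / (2 * Real.sqrt 2 * Real.sqrt (∑ τ ∈ Icc 1 t, ‖G τ‖ ^ 2))) * ‖G t‖ ^ 2 := by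
      intro n
      induction n with
      | zero => simp
      | succ n ih =>
        set cn := Real.sqrt (∑ τ ∈ Icc 1 n, ‖G τ‖ ^ 2) with hcn
        set cn1 := Real.sqrt (∑ τ ∈ Icc 1 (n+1), ‖G τ‖ ^ 2) with hcn1
        have hcn0 : 0 ≤ cn := Real.sqrt_nonneg _
        have hcn10 : 0 ≤ cn1 := Real.sqrt_nonneg _
        have hcmono : cn ≤ cn1 := Real.sqrt_le_sqrt (hSmono n)
        rw [Finset.sum_Icc_succ_top (Nat.one_le_iff_ne_zero.2 (Nat.succ_ne_zero n)),
          Finset.sum_Icc_succ_top (Nat.one_le_iff_ne_zero.2 (Nat.succ_ne_zero n))]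
        rcases eq_or_lt_of_le hcn10 with hz | hpos
        · -- cn1 = 0
          have hSz : (∑ τ ∈ Icc 1 (n+1), ‖G τ‖ ^ 2) = 0 :=
            (Real.sqrt_eq_zero (hS0 _)).1 hz.symm
          have hxz : ‖G (n+1)‖ ^ 2 = 0 := by
            have := (Finset.sum_eq_zero_iff_of_nonneg
              (fun τ _ => sq_nonneg ‖G τ‖)).1 hSz (n+1)
              (mem_Icc.2 ⟨Nat.one_le_iff_ne_zero.2 (Nat.succ_ne_zero n), le_refl _⟩)
            exact this
          have hGz : G (n+1) = 0 := by
            rwa [sq_eq_zero_iff, norm_eq_zero] at hxz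
          have hcnz : cn = 0 := by
            have h1 : (∑ τ ∈ Icc 1 n, ‖G τ‖ ^ 2) = 0 :=
              le_antisymm (hSz ▸ hSmono n) (hS0 n)
            rw [hcn, h1, Real.sqrt_zero]
          rw [hcnz] at ih
          simp only [zero_div, zero_mul, add_zero, zero_add] at ih
          rw [← hz, hxz, hGz]
          simp only [inner_zero_left, add_zero, zero_div, zero_mul, mul_zero, zero_add]
          linarith [ih]
        · -- cn1 > 0
          have hiter := hiter_pos (n+1) (Nat.one_le_iff_ne_zero.2 (Nat.succ_ne_zero n))
            (by rwa [← hcn1])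
          set η := D / (Real.sqrt 2 * cn1) with hη
          have hηpos : 0 < η := div_pos hDpos (mul_pos hs2pos hpos)
          -- step inequality
          have hproj_le : ‖v (n+2) - wstar‖ ≤ ‖(v (n+1) - wstar) - η • G (n+1)‖ := by
            rw [hiter]
            have := aux_proj_dist hKconvex hproj_mem hproj_min
              (v (n+1) - η • G (n+1)) hwstar
            convert this using 2
            abel
          have hstep : ‖v (n+2) - wstar‖ ^ 2 ≤ ‖v (n+1) - wstar‖ ^ 2
              - 2 * η * ⟪G (n+1), v (n+1) - wstar⟫ + η ^ 2 * ‖G (n+1)‖ ^ 2 := by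
            have hexp : ‖(v (n+1) - wstar) - η • G (n+1)‖ ^ 2 = ‖v (n+1) - wstar‖ ^ 2
                - 2 * η * ⟪G (n+1), v (n+1) - wstar⟫ + η ^ 2 * ‖G (n+1)‖ ^ 2 := by
              rw [norm_sub_sq_real, real_inner_smul_right, norm_smul,
                Real.norm_eq_abs, abs_of_pos hηpos, mul_pow,
                real_inner_comm (v (n+1) - wstar) (G (n+1))]
              ring
            calc ‖v (n+2) - wstar‖ ^ 2 ≤ ‖(v (n+1) - wstar) - η • G (n+1)‖ ^ 2 := by
                  have h0 := norm_nonneg (v (n+2) - wstar)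
                  nlinarith [hproj_le]
              _ = _ := hexp
          -- algebra
          have h2ne : Real.sqrt 2 ≠ 0 := ne_of_gt hs2pos
          have hDne : D ≠ 0 := ne_of_gt hDpos
          have hcne : cn1 ≠ 0 := ne_of_gt hpos
          have hsq2 : Real.sqrt 2 ^ 2 = 2 := Real.sq_sqrt (by norm_num)
          have hb1 : (cn1 / (Real.sqrt 2 * D)) * (2 * η) = 1 := by
            rw [hη]
            field_simp
            linear_combination (-1 : ℝ) * hu2
          have hbe : (cn1 / (Real.sqrt 2 * D)) * (η ^ 2 * ‖G (n+1)‖ ^ 2)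
              = (D / (2 * Real.sqrt 2 * cn1)) * ‖G (n+1)‖ ^ 2 := by
            have hη2 : η ^ 2 = D ^ 2 / (2 * cn1 ^ 2) := by
              rw [hη, div_pow, mul_pow, hsq2]
            rw [hη2]
            field_simp
          have hb0 : 0 ≤ cn1 / (Real.sqrt 2 * D) := div_nonneg hcn10 (by positivity)
          have fact1 : (cn1 / (Real.sqrt 2 * D)) * ‖v (n+2) - wstar‖ ^ 2
              ≤ (cn1 / (Real.sqrt 2 * D)) * ‖v (n+1) - wstar‖ ^ 2
                - ⟪G (n+1), v (n+1) - wstar⟫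
                + (D / (2 * Real.sqrt 2 * cn1)) * ‖G (n+1)‖ ^ 2 := by
            calc (cn1 / (Real.sqrt 2 * D)) * ‖v (n+2) - wstar‖ ^ 2
                ≤ (cn1 / (Real.sqrt 2 * D)) * (‖v (n+1) - wstar‖ ^ 2
                  - 2 * η * ⟪G (n+1), v (n+1) - wstar⟫ + η ^ 2 * ‖G (n+1)‖ ^ 2) :=
                  mul_le_mul_of_nonneg_left hstep hb0
              _ = (cn1 / (Real.sqrt 2 * D)) * ‖v (n+1) - wstar‖ ^ 2
                  - ((cn1 / (Real.sqrt 2 * D)) * (2 * η)) * ⟪G (n+1), v (n+1) - wstar⟫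
                  + (cn1 / (Real.sqrt 2 * D)) * (η ^ 2 * ‖G (n+1)‖ ^ 2) := by ring
              _ = _ := by rw [hb1, hbe]; ring
          have fact2 : (cn1 / (Real.sqrt 2 * D) - cn / (Real.sqrt 2 * D))
                * ‖v (n+1) - wstar‖ ^ 2
              ≤ (cn1 / (Real.sqrt 2 * D) - cn / (Real.sqrt 2 * D)) * D ^ 2 := by
            refine mul_le_mul_of_nonneg_left
              (haD (n+1) (Nat.one_le_iff_ne_zero.2 (Nat.succ_ne_zero n))) ?_
            have h : cn / (Real.sqrt 2 * D) ≤ cn1 / (Real.sqrt 2 * D) := by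
              rw [div_eq_mul_inv, div_eq_mul_inv]
              exact mul_le_mul_of_nonneg_right hcmono (inv_nonneg.2 (by positivity))
            linarith
          linarith [ih, fact1, fact2]
    -- conclude from key at T
    have hkey := key T
    have hfin : ∀ t ∈ Icc 1 T,
        (D / (2 * Real.sqrt 2 * Real.sqrt (∑ τ ∈ Icc 1 t, ‖G τ‖ ^ 2))) * ‖G t‖ ^ 2
        = (D / (2 * Real.sqrt 2)) * (‖G t‖ ^ 2 / Real.sqrt (∑ τ ∈ Icc 1 t, ‖G τ‖ ^ 2)) := by
      intro t ht
      rcases eq_or_ne (Real.sqrt (∑ τ ∈ Icc 1 t, ‖G τ‖ ^ 2)) 0 with hz | hnz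
      · have hSz : (∑ τ ∈ Icc 1 t, ‖G τ‖ ^ 2) = 0 := (Real.sqrt_eq_zero (hS0 _)).1 hz
        have hxz : ‖G t‖ ^ 2 = 0 :=
          (Finset.sum_eq_zero_iff_of_nonneg (fun τ _ => sq_nonneg ‖G τ‖)).1 hSz t
            (mem_Icc.2 ⟨(mem_Icc.1 ht).1, le_refl t⟩)
        rw [hz, hxz]
        simp
      · field_simp
    rw [Finset.sum_congr rfl hfin, ← Finset.mul_sum] at hkey
    have hsum := aux_sum_div_sqrt (x := fun t => ‖G t‖ ^ 2) (fun t => sq_nonneg _) T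
    have hbT0 : 0 ≤ (Real.sqrt (∑ τ ∈ Icc 1 T, ‖G τ‖ ^ 2) / (Real.sqrt 2 * D))
        * ‖v (T+1) - wstar‖ ^ 2 := by positivity
    have hD2 : (Real.sqrt (∑ τ ∈ Icc 1 T, ‖G τ‖ ^ 2) / (Real.sqrt 2 * D)) * D ^ 2
        + (D / (2 * Real.sqrt 2)) * (2 * Real.sqrt (∑ τ ∈ Icc 1 T, ‖G τ‖ ^ 2))
        = Real.sqrt 2 * D * Real.sqrt (∑ τ ∈ Icc 1 T, ‖G τ‖ ^ 2) := by
      have hDne : D ≠ 0 := ne_of_gt hDpos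
      have h2ne : Real.sqrt 2 ≠ 0 := ne_of_gt hs2pos
      set c := Real.sqrt (∑ τ ∈ Icc 1 T, ‖G τ‖ ^ 2) with hc
      have e1 : (c / (Real.sqrt 2 * D)) * D ^ 2 = c * D / Real.sqrt 2 := by
        field_simp
      have e2 : (D / (2 * Real.sqrt 2)) * (2 * c) = c * D / Real.sqrt 2 := by
        field_simp
      have e3 : c * D / Real.sqrt 2 + c * D / Real.sqrt 2 = Real.sqrt 2 * D * c := by
        field_simp
        linear_combination (-c) * hu2
      rw [e1, e2, e3]
    have hmul : (D / (2 * Real.sqrt 2)) * (∑ t ∈ Icc 1 T,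
          ‖G t‖ ^ 2 / Real.sqrt (∑ τ ∈ Icc 1 t, ‖G τ‖ ^ 2))
        ≤ (D / (2 * Real.sqrt 2)) * (2 * Real.sqrt (∑ τ ∈ Icc 1 T, ‖G τ‖ ^ 2)) :=
      mul_le_mul_of_nonneg_left hsum (by positivity)
    linarith [hkey, hmul, hbT0, hD2.le, hD2.ge]
variable {Ω : Type*} {mΩ : MeasurableSpace Ω} {μ : Measure Ω}
  {H : Type*} [NormedAddCommGroup H] [InnerProductSpace ℝ H]

lemma aux_integrable_inner {f g : Ω → H} (hf : MemLp f 2 μ) (hg : MemLp g 2 μ) :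
    Integrable (fun ω => ⟪f ω, g ω⟫) μ := by
  have h := L2.integrable_inner (𝕜 := ℝ) (hf.toLp f) (hg.toLp g)
  refine h.congr ?_
  filter_upwards [hf.coeFn_toLp, hg.coeFn_toLp] with ω h1 h2
  rw [h1, h2]

lemma aux_integrable_mul {f g : Ω → ℝ} (hf : MemLp f 2 μ) (hg : MemLp g 2 μ) :
    Integrable (fun ω => f ω * g ω) μ := by
  have h := aux_integrable_inner hf hg
  refine h.congr (Filter.Eventually.of_forall fun ω => ?_)
  simp [RCLike.inner_apply, mul_comm]

end FULLAUX

/-- second-moment regret guarantee for adaptive projected descent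
driven by unbiased noisy sub-gradient observations. -/
theorem stmt7
    {Ω : Type*} {mΩ : MeasurableSpace Ω} {μ : Measure Ω} [IsProbabilityMeasure μ]
    (𝓕 : Filtration ℕ mΩ)
    {H : Type*} [NormedAddCommGroup H] [InnerProductSpace ℝ H] [CompleteSpace H]
    (K : Set H) (hKne : K.Nonempty) (hKclosed : IsClosed K) (hKconvex : Convex ℝ K)
    (D : ℝ) (hD : ∀ w ∈ K, ∀ v ∈ K, ‖w - v‖ ≤ D)
    (proj : H → H)
    (hproj_mem : ∀ v, proj v ∈ K)
    (hproj_min : ∀ v, ∀ u ∈ K, ‖v - proj v‖ ≤ ‖v - u‖)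
    (T : ℕ) (g gtld γ : ℕ → Ω → H)
    (hgtld_sq : ∀ t ∈ Icc 1 T, MemLp (gtld t) 2 μ)
    (hgtld_meas : ∀ t ∈ Icc 1 T, StronglyMeasurable[𝓕 t] (gtld t))
    (hg_meas : ∀ t ∈ Icc 1 T, StronglyMeasurable[𝓕 (t - 1)] (g t))
    (hunbiased : ∀ t ∈ Icc 1 T, μ[gtld t | 𝓕 (t - 1)] =ᵐ[μ] g t)
    (hγ : ∀ t ω, γ t ω = gtld t ω - g t ω)
    (w : ℕ → Ω → H) (w₁ : H) (hw₁K : w₁ ∈ K) (hw1 : ∀ ω, w 1 ω = w₁)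
    (hiter_pos : ∀ t, 1 ≤ t → ∀ ω,
      0 < Real.sqrt (∑ τ ∈ Icc 1 t, ‖gtld τ ω‖ ^ 2) →
      w (t + 1) ω = proj (w t ω -
        (D / (Real.sqrt 2 * Real.sqrt (∑ τ ∈ Icc 1 t, ‖gtld τ ω‖ ^ 2))) • gtld t ω))
    (hiter_zero : ∀ t, 1 ≤ t → ∀ ω,
      Real.sqrt (∑ τ ∈ Icc 1 t, ‖gtld τ ω‖ ^ 2) = 0 → w (t + 1) ω = w t ω)
    (wstar : H) (hwstar : wstar ∈ K)
    (R : Ω → ℝ) (hRmeas : Measurable R)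
    (hRnonneg : ∀ᵐ ω ∂μ, 0 ≤ R ω)
    (hRle : ∀ᵐ ω ∂μ, R ω ≤ ∑ t ∈ Icc 1 T, ⟪g t ω, w t ω - wstar⟫) :
    (∫ ω, R ω ^ 2 ∂μ) ≤
        D ^ 2 * ∫ ω, (∑ t ∈ Icc 1 T, (4 * ‖g t ω‖ ^ 2 + 6 * ‖γ t ω‖ ^ 2)) ∂μ ∧
      D ^ 2 * (∫ ω, (∑ t ∈ Icc 1 T, (4 * ‖g t ω‖ ^ 2 + 6 * ‖γ t ω‖ ^ 2)) ∂μ) ≤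
        6 * D ^ 2 * ∫ ω, (∑ t ∈ Icc 1 T, ‖gtld t ω‖ ^ 2) ∂μ := by
  classical
  have hm : ∀ t : ℕ, 𝓕 t ≤ mΩ := fun t => 𝓕.le t
  have hDnn : 0 ≤ D := by simpa using hD wstar hwstar wstar hwstar
  -- iterates stay in K
  have hwK : ∀ t, 1 ≤ t → ∀ ω, w t ω ∈ K := by
    intro t
    induction t with
    | zero => intro h; exact absurd h (by norm_num)
    | succ n ih =>
      intro _ ω
      rcases Nat.eq_zero_or_pos n with hn | hn
      · subst hn; rw [hw1 ω]; exact hw₁K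
      · rcases lt_or_ge 0 (Real.sqrt (∑ τ ∈ Icc 1 n, ‖gtld τ ω‖ ^ 2)) with hp | hz
        · rw [hiter_pos n hn ω hp]; exact hproj_mem _
        · rw [hiter_zero n hn ω (le_antisymm hz (Real.sqrt_nonneg _))]
          exact ih hn ω
  have hwD : ∀ t, 1 ≤ t → ∀ ω, ‖w t ω - wstar‖ ≤ D :=
    fun t ht ω => hD _ (hwK t ht ω) _ hwstar
  -- projection is continuous
  have projCont : Continuous proj := by
    have hlip : LipschitzWith 1 proj := by
      refine LipschitzWith.of_dist_le_mul fun a b => ?_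
      rw [dist_eq_norm, dist_eq_norm, NNReal.coe_one, one_mul]
      exact aux_proj_lip hKconvex hproj_mem hproj_min a b
    exact hlip.continuous
  -- strong measurability of the iterates
  have hwsm : ∀ s, s ≤ T → StronglyMeasurable[𝓕 s] (w (s + 1)) := by
    intro s
    induction s with
    | zero =>
      intro _
      have h : w 1 = fun _ => w₁ := funext hw1
      rw [h]; exact stronglyMeasurable_const
    | succ n ih =>
      intro hsT
      have ihn := ih (le_of_lt hsT)
      have hGm : ∀ τ ∈ Icc 1 (n+1), StronglyMeasurable[𝓕 (n+1)] (gtld τ) := by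
        intro τ hτ
        exact (hgtld_meas τ (mem_Icc.2 ⟨(mem_Icc.1 hτ).1,
          le_trans (mem_Icc.1 hτ).2 hsT⟩)).mono (𝓕.mono (mem_Icc.1 hτ).2)
      have hSmeas : Measurable[𝓕 (n+1)]
          (fun ω => ∑ τ ∈ Icc 1 (n+1), ‖gtld τ ω‖ ^ 2) := by
        refine Finset.measurable_sum _ fun τ hτ => ?_
        exact ((hGm τ hτ).norm.measurable).pow_const 2
      have hwsm1 : StronglyMeasurable[𝓕 (n+1)] (w (n+1)) := ihn.mono (𝓕.mono (Nat.le_succ n))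
      have hwasm : StronglyMeasurable[𝓕 (n+1)] (fun ω => proj (w (n+1) ω -
          (D / (Real.sqrt 2 * Real.sqrt (∑ τ ∈ Icc 1 (n+1), ‖gtld τ ω‖ ^ 2)))
            • gtld (n+1) ω)) := by
        refine projCont.comp_stronglyMeasurable ?_
        refine hwsm1.sub (StronglyMeasurable.smul ?_
          (hGm (n+1) (mem_Icc.2 ⟨Nat.one_le_iff_ne_zero.2 (Nat.succ_ne_zero n), le_refl _⟩)))
        exact (measurable_const.div ((hSmeas.sqrt).const_mul (Real.sqrt 2))).stronglyMeasurable
      have heq : w (n+2) = fun ω =>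
          if 0 < Real.sqrt (∑ τ ∈ Icc 1 (n+1), ‖gtld τ ω‖ ^ 2) then
            proj (w (n+1) ω -
              (D / (Real.sqrt 2 * Real.sqrt (∑ τ ∈ Icc 1 (n+1), ‖gtld τ ω‖ ^ 2)))
                • gtld (n+1) ω)
          else w (n+1) ω := by
        funext ω
        by_cases h : 0 < Real.sqrt (∑ τ ∈ Icc 1 (n+1), ‖gtld τ ω‖ ^ 2)
        · rw [if_pos h]
          exact hiter_pos (n+1) (Nat.one_le_iff_ne_zero.2 (Nat.succ_ne_zero n)) ω h
        · rw [if_neg h]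
          exact hiter_zero (n+1) (Nat.one_le_iff_ne_zero.2 (Nat.succ_ne_zero n)) ω
            (le_antisymm (not_lt.1 h) (Real.sqrt_nonneg _))
      rw [heq]
      exact StronglyMeasurable.ite (measurableSet_lt measurable_const hSmeas.sqrt) hwasm hwsm1
  have hwsm' : ∀ t, 1 ≤ t → t ≤ T + 1 → StronglyMeasurable[𝓕 (t - 1)] (w t) := by
    intro t ht htT
    obtain ⟨s, rfl⟩ : ∃ s, t = s + 1 := ⟨t - 1, (Nat.succ_pred_eq_of_pos ht).symm⟩
    simpa using hwsm s (Nat.succ_le_succ_iff.1 htT)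
  -- L² facts
  have hg2 : ∀ t ∈ Icc 1 T, MemLp (g t) 2 μ :=
    fun t ht => (aux_condexp_memℒp (hm (t-1)) (hgtld_sq t ht)).ae_eq (hunbiased t ht)
  have hγeq : ∀ t, γ t = fun ω => gtld t ω - g t ω := fun t => funext (hγ t)
  have hγ2 : ∀ t ∈ Icc 1 T, MemLp (γ t) 2 μ := by
    intro t ht
    rw [hγeq t]
    exact (hgtld_sq t ht).sub (hg2 t ht)
  have hγ0 : ∀ t ∈ Icc 1 T, μ[γ t | 𝓕 (t-1)] =ᵐ[μ] 0 := by
    intro t ht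
    have h1 : Integrable (gtld t) μ := (hgtld_sq t ht).integrable one_le_two
    have h2 : Integrable (g t) μ := (hg2 t ht).integrable one_le_two
    have h3 := condExp_sub (m := 𝓕 (t-1)) h1 h2
    have h4 : μ[g t | 𝓕 (t-1)] = g t := condExp_of_stronglyMeasurable (hm (t-1)) (hg_meas t ht) h2
    rw [hγeq t]
    filter_upwards [h3, hunbiased t ht] with ω hω1 hω2
    show (μ[gtld t - g t | 𝓕 (t-1)]) ω = (0 : Ω → H) ω
    rw [hω1, Pi.sub_apply, hω2, h4, sub_self, Pi.zero_apply]
  have hγsm : ∀ t ∈ Icc 1 T, StronglyMeasurable[𝓕 t] (γ t) := by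
    intro t ht
    rw [hγeq t]
    exact (hgtld_meas t ht).sub ((hg_meas t ht).mono (𝓕.mono (Nat.sub_le t 1)))
  -- orthogonality workhorse
  have horto : ∀ t ∈ Icc 1 T, ∀ Z : Ω → H, StronglyMeasurable[𝓕 (t-1)] Z →
      MemLp Z 2 μ → ∫ ω, ⟪γ t ω, Z ω⟫ ∂μ = 0 := by
    intro t ht Z hZm hZ2
    exact aux_inner_condexp_zero (hm (t-1)) (hγ2 t ht) (hγ0 t ht) hZ2
      (hZm.aestronglyMeasurable)
  -- the martingale increments
  set mf : ℕ → Ω → ℝ := fun t ω => ⟪γ t ω, w t ω - wstar⟫ with hmf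
  have hmfsm : ∀ t ∈ Icc 1 T, StronglyMeasurable[𝓕 t] (mf t) := by
    intro t ht
    refine StronglyMeasurable.inner (hγsm t ht) ?_
    exact (((hwsm' t (mem_Icc.1 ht).1 (le_trans (mem_Icc.1 ht).2 (Nat.le_succ T))).mono
      (𝓕.mono (Nat.sub_le t 1))).sub stronglyMeasurable_const)
  have hmfb : ∀ t ∈ Icc 1 T, ∀ ω, |mf t ω| ≤ D * ‖γ t ω‖ := by
    intro t ht ω
    calc |⟪γ t ω, w t ω - wstar⟫| ≤ ‖γ t ω‖ * ‖w t ω - wstar‖ := abs_real_inner_le_norm _ _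
      _ ≤ ‖γ t ω‖ * D := mul_le_mul_of_nonneg_left (hwD t (mem_Icc.1 ht).1 ω) (norm_nonneg _)
      _ = D * ‖γ t ω‖ := mul_comm _ _
  have hmf2 : ∀ t ∈ Icc 1 T, MemLp (mf t) 2 μ := by
    intro t ht
    refine MemLp.of_le ((hγ2 t ht).norm.const_mul D)
      (((hmfsm t ht).mono (hm t)).aestronglyMeasurable) ?_
    refine Filter.Eventually.of_forall fun ω => ?_
    rw [Real.norm_eq_abs]
    exact (hmfb t ht ω).trans (le_abs_self _)
  -- cross terms vanish
  have hcross : ∀ s ∈ Icc 1 T, ∀ t ∈ Icc 1 T, s < t →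
      ∫ ω, mf s ω * mf t ω ∂μ = 0 := by
    intro s hs t ht hst
    have hts : s ≤ t - 1 := Nat.le_sub_one_of_lt hst
    have hZsm : StronglyMeasurable[𝓕 (t-1)] (fun ω => mf s ω • (w t ω - wstar)) := by
      have h1 : StronglyMeasurable[𝓕 (t-1)] (mf s) :=
        (hmfsm s hs).mono (𝓕.mono hts)
      have h2 : StronglyMeasurable[𝓕 (t-1)] (fun ω => w t ω - wstar) :=
        ((hwsm' t (mem_Icc.1 ht).1 (le_trans (mem_Icc.1 ht).2 (Nat.le_succ T))).sub
          stronglyMeasurable_const)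
      exact h1.smul h2
    have hZ2 : MemLp (fun ω => mf s ω • (w t ω - wstar)) 2 μ := by
      refine MemLp.of_le ((hγ2 s hs).norm.const_mul (D * D))
        ((hZsm.mono (hm (t-1))).aestronglyMeasurable) ?_
      refine Filter.Eventually.of_forall fun ω => ?_
      rw [norm_smul, Real.norm_eq_abs]
      calc |mf s ω| * ‖w t ω - wstar‖ ≤ (D * ‖γ s ω‖) * D := by
            refine mul_le_mul (hmfb s hs ω) (hwD t (mem_Icc.1 ht).1 ω)
              (norm_nonneg _) (by positivity)
        _ = D * D * ‖γ s ω‖ := by ring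
        _ ≤ ‖D * D * ‖γ s ω‖‖ := le_abs_self _
    have h0 := horto t ht _ hZsm hZ2
    rw [← h0]
    refine integral_congr_ae (Filter.Eventually.of_forall fun ω => ?_)
    show mf s ω * mf t ω = ⟪γ t ω, mf s ω • (w t ω - wstar)⟫
    simp only [hmf, real_inner_smul_right]
  -- diagonal terms
  have hγsq_int : ∀ t ∈ Icc 1 T, Integrable (fun ω => ‖γ t ω‖ ^ 2) μ :=
    fun t ht => (hγ2 t ht).norm.integrable_sq
  have hdiag : ∀ t ∈ Icc 1 T, ∫ ω, mf t ω * mf t ω ∂μ ≤ D ^ 2 * ∫ ω, ‖γ t ω‖ ^ 2 ∂μ := by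
    intro t ht
    rw [← integral_const_mul]
    refine integral_mono_ae (aux_integrable_mul (hmf2 t ht) (hmf2 t ht))
      ((hγsq_int t ht).const_mul _) ?_
    refine Filter.Eventually.of_forall fun ω => ?_
    have h1 := hmfb t ht ω
    have h2 : 0 ≤ ‖γ t ω‖ := norm_nonneg _
    have h3 : |mf t ω| * |mf t ω| ≤ (D * ‖γ t ω‖) * (D * ‖γ t ω‖) :=
      mul_le_mul h1 h1 (abs_nonneg _) (by positivity)
    show mf t ω * mf t ω ≤ D ^ 2 * ‖γ t ω‖ ^ 2
    nlinarith [h3, abs_mul_abs_self (mf t ω)]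
  -- second moment of the martingale sum
  set M : Ω → ℝ := fun ω => ∑ t ∈ Icc 1 T, mf t ω with hM
  have hM2 : MemLp M 2 μ :=
    (memLp_finset_sum' _ hmf2).ae_eq
      (Filter.Eventually.of_forall fun ω => by simp [hM, Finset.sum_apply])
  have hMsq : ∫ ω, M ω ^ 2 ∂μ ≤ D ^ 2 * ∑ t ∈ Icc 1 T, ∫ ω, ‖γ t ω‖ ^ 2 ∂μ := by
    have hexp : ∀ ω, M ω ^ 2 = ∑ t ∈ Icc 1 T, ∑ s ∈ Icc 1 T, mf t ω * mf s ω := by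
      intro ω
      rw [hM, sq, Finset.sum_mul_sum]
    have hstep1 : ∫ ω, M ω ^ 2 ∂μ
        = ∑ t ∈ Icc 1 T, ∑ s ∈ Icc 1 T, ∫ ω, mf t ω * mf s ω ∂μ := by
      rw [integral_congr_ae (Filter.Eventually.of_forall hexp)]
      rw [integral_finset_sum _ (fun t ht => integrable_finset_sum _
        (fun s hs => aux_integrable_mul (hmf2 t ht) (hmf2 s hs)))]
      exact Finset.sum_congr rfl fun t ht => integral_finset_sum _
        (fun s hs => aux_integrable_mul (hmf2 t ht) (hmf2 s hs))
    have hstep2 : ∀ t ∈ Icc 1 T,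
        ∑ s ∈ Icc 1 T, ∫ ω, mf t ω * mf s ω ∂μ = ∫ ω, mf t ω * mf t ω ∂μ := by
      intro t ht
      refine Finset.sum_eq_single_of_mem t ht fun s hs hst => ?_
      rcases lt_or_gt_of_ne hst with h | h
      · rw [← hcross s hs t ht h]
        refine integral_congr_ae (Filter.Eventually.of_forall fun ω => ?_)
        exact mul_comm _ _
      · exact hcross t ht s hs h
    rw [hstep1, Finset.sum_congr rfl hstep2, Finset.mul_sum]
    exact Finset.sum_le_sum hdiag
  -- expectation of the squared norms decomposition
  have hgt_int : ∀ t ∈ Icc 1 T, Integrable (fun ω => ‖gtld t ω‖ ^ 2) μ :=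
    fun t ht => (hgtld_sq t ht).norm.integrable_sq
  have hg_int : ∀ t ∈ Icc 1 T, Integrable (fun ω => ‖g t ω‖ ^ 2) μ :=
    fun t ht => (hg2 t ht).norm.integrable_sq
  have hg_nn : ∀ t ∈ Icc 1 T, 0 ≤ ∫ ω, ‖g t ω‖ ^ 2 ∂μ :=
    fun t ht => integral_nonneg fun ω => sq_nonneg _
  have hγ_nn : ∀ t ∈ Icc 1 T, 0 ≤ ∫ ω, ‖γ t ω‖ ^ 2 ∂μ :=
    fun t ht => integral_nonneg fun ω => sq_nonneg _
  have hSsplit : ∀ t ∈ Icc 1 T, ∫ ω, ‖gtld t ω‖ ^ 2 ∂μ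
      = ∫ ω, ‖g t ω‖ ^ 2 ∂μ + ∫ ω, ‖γ t ω‖ ^ 2 ∂μ := by
    intro t ht
    have hpt : ∀ ω, ‖gtld t ω‖ ^ 2
        = ‖g t ω‖ ^ 2 + 2 * ⟪γ t ω, g t ω⟫ + ‖γ t ω‖ ^ 2 := by
      intro ω
      have hsum : gtld t ω = g t ω + γ t ω := by rw [hγ t ω]; abel
      rw [hsum, norm_add_sq_real, real_inner_comm]
    have hiint : Integrable (fun ω => ⟪γ t ω, g t ω⟫) μ :=
      aux_integrable_inner (hγ2 t ht) (hg2 t ht)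
    have h0 : ∫ ω, ⟪γ t ω, g t ω⟫ ∂μ = 0 :=
      horto t ht (g t) (hg_meas t ht) (hg2 t ht)
    have hi1 : Integrable (fun ω => ‖g t ω‖ ^ 2 + 2 * ⟪γ t ω, g t ω⟫) μ :=
      (hg_int t ht).add (hiint.const_mul 2)
    calc ∫ ω, ‖gtld t ω‖ ^ 2 ∂μ
        = ∫ ω, (‖g t ω‖ ^ 2 + 2 * ⟪γ t ω, g t ω⟫ + ‖γ t ω‖ ^ 2) ∂μ :=
          integral_congr_ae (Filter.Eventually.of_forall hpt)
      _ = (∫ ω, (‖g t ω‖ ^ 2 + 2 * ⟪γ t ω, g t ω⟫) ∂μ) + ∫ ω, ‖γ t ω‖ ^ 2 ∂μ :=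
          integral_add hi1 (hγsq_int t ht)
      _ = ((∫ ω, ‖g t ω‖ ^ 2 ∂μ) + ∫ ω, 2 * ⟪γ t ω, g t ω⟫ ∂μ) + ∫ ω, ‖γ t ω‖ ^ 2 ∂μ := by
          congr 1
          exact integral_add (hg_int t ht) (hiint.const_mul 2)
      _ = ∫ ω, ‖g t ω‖ ^ 2 ∂μ + ∫ ω, ‖γ t ω‖ ^ 2 ∂μ := by
          rw [integral_const_mul, h0]
          ring
  -- pointwise regret bound
  set S : Ω → ℝ := fun ω => ∑ τ ∈ Icc 1 T, ‖gtld τ ω‖ ^ 2 with hS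
  have hS_nn : ∀ ω, 0 ≤ S ω := fun ω => sum_nonneg fun τ _ => sq_nonneg _
  have hreg : ∀ ω, ∑ t ∈ Icc 1 T, ⟪gtld t ω, w t ω - wstar⟫
      ≤ Real.sqrt 2 * D * Real.sqrt (S ω) := by
    intro ω
    exact aux_regret hKconvex hD hproj_mem hproj_min (fun t => gtld t ω) (fun t => w t ω)
      (fun t ht => hwK t ht ω)
      (fun t ht hp => hiter_pos t ht ω hp)
      (fun t ht hz => hiter_zero t ht ω hz) hwstar T
  have hRb : ∀ᵐ ω ∂μ, R ω ≤ Real.sqrt 2 * D * Real.sqrt (S ω) + |M ω| := by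
    filter_upwards [hRle] with ω h
    have hdec : ∑ t ∈ Icc 1 T, ⟪g t ω, w t ω - wstar⟫
        = (∑ t ∈ Icc 1 T, ⟪gtld t ω, w t ω - wstar⟫) - M ω := by
      rw [hM, ← Finset.sum_sub_distrib]
      refine Finset.sum_congr rfl fun t ht => ?_
      rw [hmf]
      have : g t ω = gtld t ω - γ t ω := by rw [hγ t ω]; abel
      rw [this, inner_sub_left]
    calc R ω ≤ ∑ t ∈ Icc 1 T, ⟪g t ω, w t ω - wstar⟫ := h
      _ = (∑ t ∈ Icc 1 T, ⟪gtld t ω, w t ω - wstar⟫) - M ω := hdec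
      _ ≤ Real.sqrt 2 * D * Real.sqrt (S ω) - M ω := by linarith [hreg ω]
      _ ≤ Real.sqrt 2 * D * Real.sqrt (S ω) + |M ω| := by
          linarith [neg_abs_le (M ω)]
  have hRsqb : ∀ᵐ ω ∂μ, R ω ^ 2 ≤ 4 * D ^ 2 * S ω + 2 * M ω ^ 2 := by
    filter_upwards [hRb, hRnonneg] with ω h1 h2
    have hA : 0 ≤ Real.sqrt 2 * D * Real.sqrt (S ω) := by positivity
    have hA2 : (Real.sqrt 2 * D * Real.sqrt (S ω)) ^ 2 = 2 * D ^ 2 * S ω := by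
      rw [mul_pow, mul_pow, Real.sq_sqrt (by norm_num : (0:ℝ) ≤ 2),
        Real.sq_sqrt (hS_nn ω)]
    nlinarith [abs_nonneg (M ω), sq_abs (M ω),
      sq_nonneg (Real.sqrt 2 * D * Real.sqrt (S ω) - |M ω|)]
  -- R is square integrable
  have hSmeas : Measurable S := by
    refine Finset.measurable_sum _ fun τ hτ => ?_
    exact ((((hgtld_meas τ hτ).mono (hm τ)).norm).measurable).pow_const 2
  have hS_int : Integrable S μ := integrable_finset_sum _ hgt_int
  have hsqrtS2 : MemLp (fun ω => Real.sqrt 2 * D * Real.sqrt (S ω)) 2 μ := by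
    have h1 : MemLp (fun ω => Real.sqrt (S ω)) 2 μ := by
      refine (memLp_two_iff_integrable_sq ((hSmeas.sqrt).aestronglyMeasurable)).2 ?_
      refine hS_int.congr (Filter.Eventually.of_forall fun ω => ?_)
      exact (Real.sq_sqrt (hS_nn ω)).symm
    simpa [mul_assoc] using h1.const_mul (Real.sqrt 2 * D)
  have hMabs : MemLp (fun ω => |M ω|) 2 μ :=
    hM2.norm.ae_eq (Filter.Eventually.of_forall fun ω => by rw [Real.norm_eq_abs])
  have hbound2 : MemLp (fun ω => Real.sqrt 2 * D * Real.sqrt (S ω) + |M ω|) 2 μ :=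
    hsqrtS2.add hMabs
  have hR2 : MemLp R 2 μ := by
    refine MemLp.of_le hbound2 hRmeas.aestronglyMeasurable ?_
    filter_upwards [hRb, hRnonneg] with ω h1 h2
    rw [Real.norm_eq_abs, abs_of_nonneg h2, Real.norm_eq_abs]
    refine h1.trans (le_abs_self _)
  -- main first inequality
  have hfirst : ∫ ω, R ω ^ 2 ∂μ
      ≤ D ^ 2 * ∫ ω, (∑ t ∈ Icc 1 T, (4 * ‖g t ω‖ ^ 2 + 6 * ‖γ t ω‖ ^ 2)) ∂μ := by
    have hint1 : Integrable (fun ω => 4 * D ^ 2 * S ω + 2 * M ω ^ 2) μ :=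
      (hS_int.const_mul _).add ((hM2.integrable_sq).const_mul 2)
    have h1 : ∫ ω, R ω ^ 2 ∂μ ≤ ∫ ω, (4 * D ^ 2 * S ω + 2 * M ω ^ 2) ∂μ :=
      integral_mono_ae hR2.integrable_sq hint1 hRsqb
    have h2 : ∫ ω, (4 * D ^ 2 * S ω + 2 * M ω ^ 2) ∂μ
        = 4 * D ^ 2 * ∫ ω, S ω ∂μ + 2 * ∫ ω, M ω ^ 2 ∂μ := by
      rw [integral_add (hS_int.const_mul _) ((hM2.integrable_sq).const_mul 2),
        integral_const_mul, integral_const_mul]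
    have h3 : ∫ ω, S ω ∂μ = ∑ t ∈ Icc 1 T, ∫ ω, ‖gtld t ω‖ ^ 2 ∂μ := by
      rw [hS]
      exact integral_finset_sum _ hgt_int
    have h4 : ∫ ω, (∑ t ∈ Icc 1 T, (4 * ‖g t ω‖ ^ 2 + 6 * ‖γ t ω‖ ^ 2)) ∂μ
        = ∑ t ∈ Icc 1 T, (4 * ∫ ω, ‖g t ω‖ ^ 2 ∂μ + 6 * ∫ ω, ‖γ t ω‖ ^ 2 ∂μ) := by
      have hterm_int : ∀ t ∈ Icc 1 T,
          Integrable (fun ω => 4 * ‖g t ω‖ ^ 2 + 6 * ‖γ t ω‖ ^ 2) μ :=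
        fun t ht => ((hg_int t ht).const_mul 4).add ((hγsq_int t ht).const_mul 6)
      rw [integral_finset_sum _ hterm_int]
      refine Finset.sum_congr rfl fun t ht => ?_
      rw [integral_add ((hg_int t ht).const_mul 4) ((hγsq_int t ht).const_mul 6),
        integral_const_mul, integral_const_mul]
    have h5 : ∑ t ∈ Icc 1 T, ∫ ω, ‖gtld t ω‖ ^ 2 ∂μ
        = ∑ t ∈ Icc 1 T, (∫ ω, ‖g t ω‖ ^ 2 ∂μ + ∫ ω, ‖γ t ω‖ ^ 2 ∂μ) :=
      Finset.sum_congr rfl hSsplit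
    have h6 : D ^ 2 * ∑ t ∈ Icc 1 T, (4 * ∫ ω, ‖g t ω‖ ^ 2 ∂μ + 6 * ∫ ω, ‖γ t ω‖ ^ 2 ∂μ)
        = 4 * D ^ 2 * ∑ t ∈ Icc 1 T, (∫ ω, ‖g t ω‖ ^ 2 ∂μ + ∫ ω, ‖γ t ω‖ ^ 2 ∂μ)
          + 2 * D ^ 2 * ∑ t ∈ Icc 1 T, ∫ ω, ‖γ t ω‖ ^ 2 ∂μ := by
      rw [Finset.mul_sum, Finset.mul_sum, Finset.mul_sum, ← Finset.sum_add_distrib]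
      refine Finset.sum_congr rfl fun t ht => ?_
      ring
    calc ∫ ω, R ω ^ 2 ∂μ ≤ 4 * D ^ 2 * ∫ ω, S ω ∂μ + 2 * ∫ ω, M ω ^ 2 ∂μ := by
          rw [← h2]; exact h1
      _ ≤ 4 * D ^ 2 * ∑ t ∈ Icc 1 T, (∫ ω, ‖g t ω‖ ^ 2 ∂μ + ∫ ω, ‖γ t ω‖ ^ 2 ∂μ)
          + 2 * (D ^ 2 * ∑ t ∈ Icc 1 T, ∫ ω, ‖γ t ω‖ ^ 2 ∂μ) := by
          rw [h3, h5]
          have := mul_le_mul_of_nonneg_left hMsq (by norm_num : (0:ℝ) ≤ 2)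
          linarith [this]
      _ = D ^ 2 * ∑ t ∈ Icc 1 T, (4 * ∫ ω, ‖g t ω‖ ^ 2 ∂μ + 6 * ∫ ω, ‖γ t ω‖ ^ 2 ∂μ) := by
          rw [h6]; ring
      _ = D ^ 2 * ∫ ω, (∑ t ∈ Icc 1 T, (4 * ‖g t ω‖ ^ 2 + 6 * ‖γ t ω‖ ^ 2)) ∂μ := by
          rw [h4]
  refine ⟨hfirst, ?_⟩
  -- second inequality
  have h4 : ∫ ω, (∑ t ∈ Icc 1 T, (4 * ‖g t ω‖ ^ 2 + 6 * ‖γ t ω‖ ^ 2)) ∂μ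
      = ∑ t ∈ Icc 1 T, (4 * ∫ ω, ‖g t ω‖ ^ 2 ∂μ + 6 * ∫ ω, ‖γ t ω‖ ^ 2 ∂μ) := by
    have hterm_int : ∀ t ∈ Icc 1 T,
        Integrable (fun ω => 4 * ‖g t ω‖ ^ 2 + 6 * ‖γ t ω‖ ^ 2) μ :=
      fun t ht => ((hg_int t ht).const_mul 4).add ((hγsq_int t ht).const_mul 6)
    rw [integral_finset_sum _ hterm_int]
    refine Finset.sum_congr rfl fun t ht => ?_
    rw [integral_add ((hg_int t ht).const_mul 4) ((hγsq_int t ht).const_mul 6),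
      integral_const_mul, integral_const_mul]
  have h3 : ∫ ω, (∑ t ∈ Icc 1 T, ‖gtld t ω‖ ^ 2) ∂μ
      = ∑ t ∈ Icc 1 T, ∫ ω, ‖gtld t ω‖ ^ 2 ∂μ := integral_finset_sum _ hgt_int
  rw [h4, h3, Finset.sum_congr rfl hSsplit, Finset.mul_sum, Finset.mul_sum]
  refine Finset.sum_le_sum fun t ht => ?_
  have ha := hg_nn t ht
  have hb := hγ_nn t ht
  nlinarith [sq_nonneg D]
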